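/- Lemma 3.7 (quotient part): Let R ⊆ S be a Prüfer (respectively quasi-Prüfer) ring extension, let J be an ideal of S, and set I = J ∩ R. Then the induced extension R/I ⊆ S/J (the induced map R/I → S/J is injective since I = J ∩ R) is Prüfer (respectively quasi-Prüfer). -/

import Mathlib

/-- A ring extension `R ⊆ S` (given by an injective algebra map) is *Prüfer* if every
intermediate ring `T ∈ [R,S]` is integrally closed in `S`, i.e. `R ⊆ S` is a normal pair. -/
def IsPruferExtension (R S : Type*) [CommRing R] [CommRing S] [Algebra R S] : Prop :=
  ∀ T : Subalgebra R S, ∀ x : S, IsIntegral T x → x ∈ T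

/-- A ring extension `R ⊆ S` is *quasi-Prüfer* if the integral closure `\overline{R}` of `R`
in `S` is such that `\overline{R} ⊆ S` is Prüfer, i.e. every intermediate ring of
`[\overline{R}, S]` is integrally closed in `S`. -/
def IsQuasiPruferExtension (R S : Type*) [CommRing R] [CommRing S] [Algebra R S] : Prop :=
  ∀ T : Subalgebra R S, integralClosure R S ≤ T → ∀ x : S, IsIntegral T x → x ∈ T

section Aux

variable {R S : Type*} [CommRing R] [CommRing S] [Algebra R S] (J : Ideal S)

/-- The pullback of a subalgebra of `S ⧸ J` along the quotient map. -/
def pullbackSubalgebra (T' : Subalgebra (R ⧸ J.comap (algebraMap R S)) (S ⧸ J)) :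
    Subalgebra R S where
  carrier := {s | Ideal.Quotient.mk J s ∈ T'}
  mul_mem' ha hb := by simpa using mul_mem ha hb
  one_mem' := by simpa using one_mem T'
  add_mem' ha hb := by simpa using add_mem ha hb
  zero_mem' := by simpa using zero_mem T'
  algebraMap_mem' r := by
    have : Ideal.Quotient.mk J (algebraMap R S r)
        = algebraMap (R ⧸ J.comap (algebraMap R S)) (S ⧸ J)
            (Ideal.Quotient.mk (J.comap (algebraMap R S)) r) :=
      (Ideal.quotientMap_mk (H := le_of_eq rfl)).symm
    show Ideal.Quotient.mk J (algebraMap R S r) ∈ T'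
    rw [this]; exact T'.algebraMap_mem _

theorem mem_pullbackSubalgebra {T' : Subalgebra (R ⧸ J.comap (algebraMap R S)) (S ⧸ J)}
    {s : S} : s ∈ pullbackSubalgebra J T' ↔ Ideal.Quotient.mk J s ∈ T' := Iff.rfl

/-- If `x ∈ S ⧸ J` is integral over `T'` and `S ⧸ J` is nontrivial, then any lift of `x`
is integral over the pullback of `T'`. -/
theorem lift_isIntegral [Nontrivial (S ⧸ J)]
    (T' : Subalgebra (R ⧸ J.comap (algebraMap R S)) (S ⧸ J)) (s : S)
    (hx : IsIntegral T' (Ideal.Quotient.mk J s)) :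
    IsIntegral (pullbackSubalgebra J T') s := by
  classical
  set T := pullbackSubalgebra J T' with hT
  obtain ⟨p, hpmonic, hpeval⟩ := hx
  -- the surjective ring hom from T to T'
  have hmem : ∀ t : T, Ideal.Quotient.mk J (t : S) ∈ T' := fun t => t.2
  let φ : T →+* T' :=
    { toFun := fun t => ⟨Ideal.Quotient.mk J (t : S), hmem t⟩
      map_one' := by ext; simp
      map_mul' := fun a b => by ext; simp
      map_zero' := by ext; simp
      map_add' := fun a b => by ext; simp }
  have hφsurj : Function.Surjective φ := by
    rintro ⟨y, hy⟩
    obtain ⟨s', rfl⟩ := Ideal.Quotient.mk_surjective y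
    exact ⟨⟨s', hy⟩, rfl⟩
  -- lift p to a monic polynomial over T
  have hlifts : p ∈ Polynomial.lifts φ := by
    rw [Polynomial.lifts_iff_coeff_lifts]
    exact fun n => hφsurj _
  obtain ⟨q, hqmap, hqdeg, hqmonic⟩ :=
    Polynomial.lifts_and_natDegree_eq_and_monic hlifts hpmonic
  -- evaluate
  have hcomp : ((algebraMap T' (S ⧸ J)).comp φ)
      = (Ideal.Quotient.mk J).comp (algebraMap T S) := by
    ext t; rfl
  have heval : Ideal.Quotient.mk J (Polynomial.eval₂ (algebraMap T S) s q) = 0 := by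
    rw [Polynomial.hom_eval₂, ← hcomp, ← Polynomial.eval₂_map, hqmap]
    exact hpeval
  have hjJ : Polynomial.eval₂ (algebraMap T S) s q ∈ J :=
    (Ideal.Quotient.eq_zero_iff_mem).mp heval
  have hjT : Polynomial.eval₂ (algebraMap T S) s q ∈ T := by
    show Ideal.Quotient.mk J _ ∈ T'
    rw [heval]; exact zero_mem T'
  set j : T := ⟨Polynomial.eval₂ (algebraMap T S) s q, hjT⟩ with hj
  -- q has positive degree
  have hq0 : 0 < q.natDegree := by
    by_contra h
    push_neg at h
    have : q.natDegree = 0 := Nat.le_zero.mp h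
    have hq1 : q = 1 := hqmonic.natDegree_eq_zero.mp this
    rw [hq1] at hjJ
    simp only [Polynomial.eval₂_one] at hjJ
    have h1 : (1 : S ⧸ J) = 0 := by
      have := (Ideal.Quotient.eq_zero_iff_mem).mpr hjJ
      simpa using this
    exact one_ne_zero h1
  refine ⟨q + Polynomial.C (-j), ?_, ?_⟩
  · refine hqmonic.add_of_left ?_
    refine lt_of_le_of_lt (Polynomial.degree_C_le) ?_
    exact_mod_cast Polynomial.natDegree_pos_iff_degree_pos.mp hq0
  · show Polynomial.eval₂ (algebraMap T S) s (q + Polynomial.C (-j)) = 0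
    rw [Polynomial.eval₂_add, Polynomial.eval₂_C]
    have halg : (algebraMap T S) (-j) = -(Polynomial.eval₂ (algebraMap T S) s q) := by
      rw [map_neg]; rfl
    rw [halg, add_neg_cancel]

end Aux

/-- **Lemma 3.7 (quotient part).** If `R ⊆ S` is Prüfer (resp. quasi-Prüfer), `J` an ideal of
`S` and `I = J ∩ R`, then the induced extension `R/I ⊆ S/J` is Prüfer (resp. quasi-Prüfer). -/
theorem isPruferExtension_quotient_and_isQuasiPruferExtension_quotient {R S : Type*}
    [CommRing R] [CommRing S] [Algebra R S] (hinj : Function.Injective (algebraMap R S))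
    (J : Ideal S) :
    (IsPruferExtension R S →
      IsPruferExtension (R ⧸ J.comap (algebraMap R S)) (S ⧸ J)) ∧
    (IsQuasiPruferExtension R S →
      IsQuasiPruferExtension (R ⧸ J.comap (algebraMap R S)) (S ⧸ J)) := by
  rcases subsingleton_or_nontrivial (S ⧸ J) with hsub | hnt
  · constructor
    · intro _ T' x _
      have : x = 0 := Subsingleton.elim _ _
      rw [this]; exact zero_mem T'
    · intro _ T' _ x _
      have : x = 0 := Subsingleton.elim _ _
      rw [this]; exact zero_mem T'
  constructor
  · intro hP T' x hx
    obtain ⟨s, rfl⟩ := Ideal.Quotient.mk_surjective x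
    have hs : IsIntegral (pullbackSubalgebra J T') s := lift_isIntegral J T' s hx
    exact (mem_pullbackSubalgebra J).mp (hP _ s hs)
  · intro hQP T' hT' x hx
    obtain ⟨s, rfl⟩ := Ideal.Quotient.mk_surjective x
    have hs : IsIntegral (pullbackSubalgebra J T') s := lift_isIntegral J T' s hx
    refine (mem_pullbackSubalgebra J).mp (hQP _ ?_ s hs)
    -- integral closure of R lands in the pullback
    intro t ht
    rw [mem_pullbackSubalgebra]
    apply hT'
    -- mk J t is integral over R ⧸ I
    obtain ⟨p, hpmonic, hpeval⟩ := ht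
    refine ⟨p.map (Ideal.Quotient.mk (J.comap (algebraMap R S))), hpmonic.map _, ?_⟩
    have hcomp : ((algebraMap (R ⧸ J.comap (algebraMap R S)) (S ⧸ J)).comp
        (Ideal.Quotient.mk (J.comap (algebraMap R S))))
        = (Ideal.Quotient.mk J).comp (algebraMap R S) := by
      ext r
      exact Ideal.quotientMap_mk (H := le_of_eq rfl)
    show Polynomial.eval₂ _ _ _ = 0
    rw [Polynomial.eval₂_map, hcomp, ← Polynomial.hom_eval₂]
    have : Polynomial.eval₂ (algebraMap R S) t p = 0 := hpeval
    rw [this, map_zero]
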